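/- Let A be a Hopf algebra with counit ε, F an A-module algebra, and ν : F → k a linear functional satisfying ν(a·f) = ε(a)ν(f) for all a ∈ A, f ∈ F (an invariant integral). Suppose the bilinear form (f', f'') ↦ ν(f' f'') on F is non-degenerate. Then for A-module algebras F₁, F₂ = F, the integral operator K : F → F₁ given by K(f) = (id ⊗ ν)(𝒦(1 ⊗ f)) associated to a kernel 𝒦 ∈ F₁ ⊗ F is a morphism of A-modules if and only if 𝒦 is A-invariant (i.e. a·𝒦 = ε(a)𝒦 for all a ∈ A, where A acts on F₁ ⊗ F via the comultiplication). -/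

import Mathlib

open TensorProduct

/-- An `A`-module-algebra structure on an algebra `F`, for a Hopf algebra `A`
over `k`: a linear action `ρ` which is unital, multiplicative in `A`,
satisfies `a·1 = ε(a)1`, and `a·(fg) = Σ (a₁f)(a₂g)` (the sum over the
comultiplication being expressed via `TensorProduct.lift`). -/
structure ModuleAlgAct (k A F : Type*) [Field k] [Ring A] [HopfAlgebra k A]
    [Ring F] [Algebra k F] where
  ρ : A →ₗ[k] F →ₗ[k] F
  one_act : ρ 1 = LinearMap.id
  mul_act : ∀ a b : A, ρ (a * b) = ρ a ∘ₗ ρ b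
  act_one : ∀ a : A, ρ a 1 = Coalgebra.counit (R := k) a • (1 : F)
  act_mul : ∀ (a : A) (f g : F), ρ a (f * g) =
      TensorProduct.lift ((LinearMap.mul k F).compl₁₂ (ρ.flip f) (ρ.flip g))
        (Coalgebra.comul (R := k) a)

/-- The induced action of `A` on `F₁ ⊗ F₂`, via the comultiplication:
`a·(x⊗y) = Σ (a₁x)⊗(a₂y)`. -/
noncomputable def tensorAct (k A F₁ F₂ : Type*) [Field k] [Ring A]
    [HopfAlgebra k A] [Ring F₁] [Algebra k F₁] [Ring F₂] [Algebra k F₂]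
    (M₁ : ModuleAlgAct k A F₁) (M₂ : ModuleAlgAct k A F₂) :
    A →ₗ[k] (F₁ ⊗[k] F₂ →ₗ[k] F₁ ⊗[k] F₂) :=
  (TensorProduct.homTensorHomMap (RingHom.id k) F₁ F₂ F₁ F₂) ∘ₗ
    (TensorProduct.map M₁.ρ M₂.ρ) ∘ₗ Coalgebra.comul (R := k)

namespace Stmt5Aux

variable {k A F₁ F₂ : Type*} [Field k] [Ring A] [HopfAlgebra k A]
    [Ring F₁] [Algebra k F₁] [Ring F₂] [Algebra k F₂]

noncomputable def OpL (ν : F₂ →ₗ[k] k) : F₁ ⊗[k] F₂ →ₗ[k] F₂ →ₗ[k] F₁ where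
  toFun t := (TensorProduct.rid k F₁).toLinearMap ∘ₗ
      TensorProduct.map LinearMap.id ν ∘ₗ LinearMap.mulLeft k t ∘ₗ
      TensorProduct.mk k F₁ F₂ 1
  map_add' t₁ t₂ := by ext f; simp [add_mul]
  map_smul' c t := by ext f; simp [smul_mul_assoc]

@[simp] lemma OpL_tmul (ν : F₂ →ₗ[k] k) (x : F₁) (y : F₂) (f : F₂) :
    OpL ν (x ⊗ₜ[k] y) f = ν (y * f) • x := by
  simp [OpL, Algebra.TensorProduct.tmul_mul_tmul]

variable (M₁ : ModuleAlgAct k A F₁) (M₂ : ModuleAlgAct k A F₂) (ν : F₂ →ₗ[k] k)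

noncomputable def Bmap (t : F₁ ⊗[k] F₂) (f : F₂) : A ⊗[k] A →ₗ[k] F₁ :=
  TensorProduct.lift (OpL ν) ∘ₗ
    TensorProduct.map ((tensorAct k A F₁ F₂ M₁ M₂).flip t) (M₂.ρ.flip f)

@[simp] lemma Bmap_tmul (t : F₁ ⊗[k] F₂) (f : F₂) (b c : A) :
    Bmap M₁ M₂ ν t f (b ⊗ₜ[k] c)
      = OpL ν (tensorAct k A F₁ F₂ M₁ M₂ b t) (M₂.ρ c f) := by
  simp [Bmap]

lemma Bmap_zero (f : F₂) : Bmap M₁ M₂ ν (0 : F₁ ⊗[k] F₂) f = 0 :=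
  TensorProduct.ext' (by simp)

lemma Bmap_add (t₁ t₂ : F₁ ⊗[k] F₂) (f : F₂) :
    Bmap M₁ M₂ ν (t₁ + t₂) f = Bmap M₁ M₂ ν t₁ f + Bmap M₁ M₂ ν t₂ f :=
  TensorProduct.ext' (by simp)

noncomputable def Emap (x : F₁) (y f : F₂) : (A ⊗[k] A) ⊗[k] A →ₗ[k] F₁ :=
  (TensorProduct.rid k F₁).toLinearMap ∘ₗ
    LinearMap.lTensor F₁ (ν ∘ₗ LinearMap.mul' k F₂) ∘ₗ
    (TensorProduct.assoc k F₁ F₂ F₂).toLinearMap ∘ₗ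
    TensorProduct.map (TensorProduct.map (M₁.ρ.flip x) (M₂.ρ.flip y)) (M₂.ρ.flip f)

@[simp] lemma Emap_tmul (x : F₁) (y f : F₂) (u v w : A) :
    Emap M₁ M₂ ν x y f ((u ⊗ₜ[k] v) ⊗ₜ[k] w) =
      ν (M₂.ρ v y * M₂.ρ w f) • M₁.ρ u x := by
  simp [Emap]

lemma L1 (x : F₁) (y : F₂) (s : A ⊗[k] A) (g : F₂) :
    OpL ν (TensorProduct.homTensorHomMap (RingHom.id k) F₁ F₂ F₁ F₂
        (TensorProduct.map M₁.ρ M₂.ρ s) (x ⊗ₜ[k] y)) g =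
    (TensorProduct.rid k F₁) (LinearMap.lTensor F₁ (ν ∘ₗ LinearMap.mulRight k g)
        (TensorProduct.map (M₁.ρ.flip x) (M₂.ρ.flip y) s)) := by
  induction s using TensorProduct.induction_on with
  | zero => simp
  | tmul u v => simp [TensorProduct.homTensorHomMap_apply]
  | add s₁ s₂ h₁ h₂ =>
      simp only [map_add, LinearMap.add_apply, h₁, h₂]

lemma L2' (x : F₁) (y f : F₂) (s : A ⊗[k] A) (c : A) :
    Emap M₁ M₂ ν x y f (s ⊗ₜ[k] c) =
    (TensorProduct.rid k F₁) (LinearMap.lTensor F₁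
        (ν ∘ₗ LinearMap.mulRight k (M₂.ρ c f))
        (TensorProduct.map (M₁.ρ.flip x) (M₂.ρ.flip y) s)) := by
  induction s using TensorProduct.induction_on with
  | zero => simp
  | tmul u v => simp
  | add s₁ s₂ h₁ h₂ =>
      simp only [add_tmul, map_add, LinearMap.add_apply, h₁, h₂]

lemma L2 (x : F₁) (y f : F₂) (w : A ⊗[k] A) :
    Bmap M₁ M₂ ν (x ⊗ₜ[k] y) f w =
    Emap M₁ M₂ ν x y f ((Coalgebra.comul (R := k)).rTensor A w) := by
  induction w using TensorProduct.induction_on with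
  | zero => simp
  | tmul b c =>
      rw [Bmap_tmul]
      have hb : tensorAct k A F₁ F₂ M₁ M₂ b (x ⊗ₜ[k] y) =
          TensorProduct.homTensorHomMap (RingHom.id k) F₁ F₂ F₁ F₂
            (TensorProduct.map M₁.ρ M₂.ρ (Coalgebra.comul (R := k) b)) (x ⊗ₜ[k] y) := rfl
      rw [hb, L1, LinearMap.rTensor_tmul, L2']
  | add w₁ w₂ h₁ h₂ =>
      simp only [map_add, LinearMap.add_apply, h₁, h₂]

lemma L3' (x : F₁) (y f : F₂) (u : A) (s : A ⊗[k] A) :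
    Emap M₁ M₂ ν x y f ((TensorProduct.assoc k A A A).symm (u ⊗ₜ[k] s)) =
    ν (TensorProduct.lift ((LinearMap.mul k F₂).compl₁₂ (M₂.ρ.flip y) (M₂.ρ.flip f)) s)
      • M₁.ρ u x := by
  induction s using TensorProduct.induction_on with
  | zero => rw [tmul_zero]; simp only [LinearEquiv.map_zero, LinearMap.map_zero]; simp
  | tmul v w => simp [TensorProduct.assoc_symm_tmul]
  | add s₁ s₂ h₁ h₂ =>
      simp only [tmul_add, map_add, h₁, h₂, add_smul]

lemma L3 (x : F₁) (y f : F₂) (w : A ⊗[k] A) :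
    Emap M₁ M₂ ν x y f ((TensorProduct.assoc k A A A).symm
        ((Coalgebra.comul (R := k)).lTensor A w)) =
    (TensorProduct.rid k F₁) (TensorProduct.map (M₁.ρ.flip x)
        (ν ∘ₗ M₂.ρ.flip (y * f)) w) := by
  induction w using TensorProduct.induction_on with
  | zero => simp only [LinearMap.map_zero, LinearEquiv.map_zero]
  | tmul u c =>
      rw [LinearMap.lTensor_tmul, L3', ← M₂.act_mul]
      simp
  | add w₁ w₂ h₁ h₂ =>
      simp only [map_add, h₁, h₂]

lemma L4 (hinv : ∀ (a : A) (f : F₂), ν (M₂.ρ a f) = Coalgebra.counit (R := k) a * ν f)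
    (x : F₁) (y f : F₂) (w : A ⊗[k] A) :
    (TensorProduct.rid k F₁) (TensorProduct.map (M₁.ρ.flip x)
        (ν ∘ₗ M₂.ρ.flip (y * f)) w) =
    ν (y * f) • M₁.ρ.flip x ((TensorProduct.rid k A)
        ((Coalgebra.counit (R := k)).lTensor A w)) := by
  induction w using TensorProduct.induction_on with
  | zero => simp
  | tmul u c =>
      simp [hinv, smul_smul, mul_comm]
  | add w₁ w₂ h₁ h₂ =>
      simp only [map_add, h₁, h₂, smul_add]

lemma dagger (hinv : ∀ (a : A) (f : F₂), ν (M₂.ρ a f) = Coalgebra.counit (R := k) a * ν f)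
    (t : F₁ ⊗[k] F₂) (f : F₂) (a : A) :
    M₁.ρ a (OpL ν t f) = Bmap M₁ M₂ ν t f (Coalgebra.comul (R := k) a) := by
  induction t using TensorProduct.induction_on with
  | zero => simp [Bmap_zero]
  | tmul x y =>
      rw [OpL_tmul, map_smul, L2, ← Coalgebra.coassoc_symm_apply, L3, L4 M₁ M₂ ν hinv,
        Coalgebra.lTensor_counit_comul]
      simp
  | add t₁ t₂ h₁ h₂ =>
      rw [map_add, LinearMap.add_apply, map_add, h₁, h₂, Bmap_add, LinearMap.add_apply]

lemma L5 (𝒦 : F₁ ⊗[k] F₂)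
    (hKinv : ∀ b : A, tensorAct k A F₁ F₂ M₁ M₂ b 𝒦 = Coalgebra.counit (R := k) b • 𝒦)
    (f : F₂) (w : A ⊗[k] A) :
    Bmap M₁ M₂ ν 𝒦 f w =
      OpL ν 𝒦 (M₂.ρ ((TensorProduct.lid k A)
        ((Coalgebra.counit (R := k)).rTensor A w)) f) := by
  induction w using TensorProduct.induction_on with
  | zero => simp only [LinearMap.map_zero, LinearEquiv.map_zero]; simp
  | tmul b c =>
      rw [Bmap_tmul, hKinv b, LinearMap.rTensor_tmul]
      simp [TensorProduct.lid_tmul]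
  | add w₁ w₂ h₁ h₂ => simp only [LinearMap.map_add, LinearEquiv.map_add, LinearMap.add_apply, h₁, h₂]

noncomputable def Cmap (𝒦 : F₁ ⊗[k] F₂) (f : F₂) : A ⊗[k] A →ₗ[k] F₁ :=
  TensorProduct.lift M₁.ρ ∘ₗ LinearMap.lTensor A
    (OpL ν 𝒦 ∘ₗ M₂.ρ.flip f ∘ₗ (HopfAlgebra.antipode (R := k) (A := A)))

@[simp] lemma Cmap_tmul (𝒦 : F₁ ⊗[k] F₂) (f : F₂) (b c : A) :
    Cmap M₁ M₂ ν 𝒦 f (b ⊗ₜ[k] c) =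
      M₁.ρ b (OpL ν 𝒦 (M₂.ρ (HopfAlgebra.antipode (R := k) c) f)) := by
  simp [Cmap]

lemma L6 (𝒦 : F₁ ⊗[k] F₂)
    (hint : ∀ (a : A) (f : F₂), OpL ν 𝒦 (M₂.ρ a f) = M₁.ρ a (OpL ν 𝒦 f))
    (f : F₂) (w : A ⊗[k] A) :
    Cmap M₁ M₂ ν 𝒦 f w = OpL ν 𝒦 (M₂.ρ ((LinearMap.mul' k A)
        ((HopfAlgebra.antipode (R := k)).lTensor A w)) f) := by
  induction w using TensorProduct.induction_on with
  | zero => simp only [LinearMap.map_zero]; simp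
  | tmul b c =>
      rw [Cmap_tmul, ← hint, LinearMap.lTensor_tmul, LinearMap.mul'_apply, M₂.mul_act]
      rfl
  | add w₁ w₂ h₁ h₂ => simp only [LinearMap.map_add, LinearEquiv.map_add, LinearMap.add_apply, h₁, h₂]

lemma claimA (𝒦 : F₁ ⊗[k] F₂)
    (hint : ∀ (a : A) (f : F₂), OpL ν 𝒦 (M₂.ρ a f) = M₁.ρ a (OpL ν 𝒦 f))
    (f : F₂) (a : A) :
    Cmap M₁ M₂ ν 𝒦 f (Coalgebra.comul (R := k) a)
      = Coalgebra.counit (R := k) a • OpL ν 𝒦 f := by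
  rw [L6 M₁ M₂ ν 𝒦 hint, HopfAlgebra.mul_antipode_lTensor_comul_apply,
    Algebra.algebraMap_eq_smul_one, map_smul, LinearMap.smul_apply, M₂.one_act]
  simp

noncomputable def Cmap₂ (𝒦 : F₁ ⊗[k] F₂) (f : F₂) : (A ⊗[k] A) ⊗[k] A →ₗ[k] F₁ :=
  TensorProduct.lift (OpL ν) ∘ₗ
    TensorProduct.map ((tensorAct k A F₁ F₂ M₁ M₂).flip 𝒦)
      (TensorProduct.lift M₂.ρ ∘ₗ LinearMap.lTensor A
        (M₂.ρ.flip f ∘ₗ HopfAlgebra.antipode (R := k))) ∘ₗ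
    (TensorProduct.assoc k A A A).toLinearMap

lemma L7' (𝒦 : F₁ ⊗[k] F₂) (f : F₂) (s : A ⊗[k] A) (c : A) :
    Cmap₂ M₁ M₂ ν 𝒦 f (s ⊗ₜ[k] c) =
      Bmap M₁ M₂ ν 𝒦 (M₂.ρ (HopfAlgebra.antipode (R := k) c) f) s := by
  induction s using TensorProduct.induction_on with
  | zero => simp only [zero_tmul, LinearMap.map_zero]
  | tmul u v => simp [Cmap₂, TensorProduct.assoc_tmul]
  | add s₁ s₂ h₁ h₂ => simp only [add_tmul, LinearMap.map_add, h₁, h₂]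

lemma L7 (𝒦 : F₁ ⊗[k] F₂)
    (hinv : ∀ (a : A) (f : F₂), ν (M₂.ρ a f) = Coalgebra.counit (R := k) a * ν f)
    (f : F₂) (w : A ⊗[k] A) :
    Cmap M₁ M₂ ν 𝒦 f w
      = Cmap₂ M₁ M₂ ν 𝒦 f ((Coalgebra.comul (R := k)).rTensor A w) := by
  induction w using TensorProduct.induction_on with
  | zero => simp only [LinearMap.map_zero]
  | tmul b c =>
      rw [Cmap_tmul, dagger M₁ M₂ ν hinv, LinearMap.rTensor_tmul, L7']
  | add w₁ w₂ h₁ h₂ => simp only [LinearMap.map_add, LinearEquiv.map_add, LinearMap.add_apply, h₁, h₂]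

lemma L10 (f : F₂) (c : A) :
    (TensorProduct.lift M₂.ρ ∘ₗ LinearMap.lTensor A
        (M₂.ρ.flip f ∘ₗ HopfAlgebra.antipode (R := k)))
      (Coalgebra.comul (R := k) c) = Coalgebra.counit (R := k) c • f := by
  have L10a : ∀ w : A ⊗[k] A,
      (TensorProduct.lift M₂.ρ ∘ₗ LinearMap.lTensor A
          (M₂.ρ.flip f ∘ₗ HopfAlgebra.antipode (R := k))) w =
      M₂.ρ ((LinearMap.mul' k A) ((HopfAlgebra.antipode (R := k)).lTensor A w)) f := by
    intro w
    induction w using TensorProduct.induction_on with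
    | zero => simp only [LinearMap.map_zero]; simp
    | tmul b c =>
        simp only [LinearMap.comp_apply, LinearMap.lTensor_tmul, TensorProduct.lift.tmul,
          LinearMap.mul'_apply, M₂.mul_act b]
        rfl
    | add w₁ w₂ h₁ h₂ => simp only [LinearMap.map_add, LinearEquiv.map_add, LinearMap.add_apply, h₁, h₂]
  rw [L10a, HopfAlgebra.mul_antipode_lTensor_comul_apply,
    Algebra.algebraMap_eq_smul_one, map_smul, LinearMap.smul_apply, M₂.one_act]
  simp

lemma L8 (𝒦 : F₁ ⊗[k] F₂) (f : F₂) (w : A ⊗[k] A) :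
    Cmap₂ M₁ M₂ ν 𝒦 f ((TensorProduct.assoc k A A A).symm
        ((Coalgebra.comul (R := k)).lTensor A w)) =
    OpL ν (tensorAct k A F₁ F₂ M₁ M₂ ((TensorProduct.rid k A)
        ((Coalgebra.counit (R := k)).lTensor A w)) 𝒦) f := by
  induction w using TensorProduct.induction_on with
  | zero => simp only [LinearMap.map_zero, LinearEquiv.map_zero]; simp
  | tmul u c =>
      rw [LinearMap.lTensor_tmul, LinearMap.lTensor_tmul]
      have h1 : Cmap₂ M₁ M₂ ν 𝒦 f ((TensorProduct.assoc k A A A).symm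
          (u ⊗ₜ[k] Coalgebra.comul (R := k) c)) =
          OpL ν (tensorAct k A F₁ F₂ M₁ M₂ u 𝒦)
            ((TensorProduct.lift M₂.ρ ∘ₗ LinearMap.lTensor A
              (M₂.ρ.flip f ∘ₗ HopfAlgebra.antipode (R := k)))
              (Coalgebra.comul (R := k) c)) := by
        show (TensorProduct.lift (OpL ν) ∘ₗ
          TensorProduct.map ((tensorAct k A F₁ F₂ M₁ M₂).flip 𝒦) _)
            ((TensorProduct.assoc k A A A)
              ((TensorProduct.assoc k A A A).symm _)) = _
        rw [LinearEquiv.apply_symm_apply]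
        simp only [LinearMap.comp_apply, TensorProduct.map_tmul, TensorProduct.lift.tmul]
        rfl
      rw [h1, L10]
      simp [TensorProduct.rid_tmul]
  | add w₁ w₂ h₁ h₂ => simp only [LinearMap.map_add, LinearEquiv.map_add, LinearMap.add_apply, h₁, h₂]

lemma claimB (𝒦 : F₁ ⊗[k] F₂)
    (hinv : ∀ (a : A) (f : F₂), ν (M₂.ρ a f) = Coalgebra.counit (R := k) a * ν f)
    (f : F₂) (a : A) :
    Cmap M₁ M₂ ν 𝒦 f (Coalgebra.comul (R := k) a)
      = OpL ν (tensorAct k A F₁ F₂ M₁ M₂ a 𝒦) f := by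
  rw [L7 M₁ M₂ ν 𝒦 hinv, ← Coalgebra.coassoc_symm_apply, L8,
    Coalgebra.lTensor_counit_comul]
  simp


lemma OpL_eq_zero {F₁ : Type*} [Ring F₁] [Algebra k F₁] (ν : F₂ →ₗ[k] k)
    (hnd : ∀ f : F₂, (∀ g : F₂, ν (f * g) = 0) → f = 0)
    (t : F₁ ⊗[k] F₂) (h : ∀ f, OpL ν t f = 0) : t = 0 := by
  classical
  let b := Module.Basis.ofVectorSpace k F₁
  let e : F₁ ⊗[k] F₂ ≃ₗ[k] ((Module.Basis.ofVectorSpaceIndex k F₁) →₀ F₂) :=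
    (TensorProduct.congr b.repr (LinearEquiv.refl k F₂)).trans
      (TensorProduct.finsuppScalarLeft k F₂ _)
  have key : ∀ (t : F₁ ⊗[k] F₂) (i) (f : F₂),
      b.repr (OpL ν t f) i = ν (e t i * f) := by
    intro t
    induction t using TensorProduct.induction_on with
    | zero => intro i f; simp [map_zero, e]
    | tmul x y =>
        intro i f
        simp [e, smul_mul_assoc, mul_comm]
    | add t₁ t₂ h₁ h₂ =>
        intro i f
        simp only [map_add, Finsupp.add_apply, LinearMap.add_apply, add_mul, h₁, h₂]
  have he : e t = 0 := by
    ext i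
    refine hnd _ fun g => ?_
    have h2 := key t i g
    rw [h g] at h2
    simpa using h2.symm
  simpa using (LinearEquiv.map_eq_zero_iff e).mp he

end Stmt5Aux

/-- Let `A` be a Hopf algebra, `F₁`, `F₂` be `A`-module algebras,
`ν : F₂ → k` an invariant integral with non-degenerate associated bilinear
form `(f',f'') ↦ ν(f'f'')`. Then the integral operator
`K : f ↦ (id ⊗ ν)(𝒦(1 ⊗ f))` with kernel `𝒦 ∈ F₁ ⊗ F₂` is a morphism of
`A`-modules if and only if the kernel `𝒦` is `A`-invariant. -/
theorem stmt5 {k A F₁ F₂ : Type*} [Field k] [Ring A] [HopfAlgebra k A]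
    [Ring F₁] [Algebra k F₁] [Ring F₂] [Algebra k F₂]
    (M₁ : ModuleAlgAct k A F₁) (M₂ : ModuleAlgAct k A F₂)
    (ν : F₂ →ₗ[k] k)
    (hinv : ∀ (a : A) (f : F₂), ν (M₂.ρ a f) = Coalgebra.counit (R := k) a * ν f)
    (hnd : ∀ f : F₂, (∀ g : F₂, ν (f * g) = 0) → f = 0)
    (hnd' : ∀ f : F₂, (∀ g : F₂, ν (g * f) = 0) → f = 0)
    (𝒦 : F₁ ⊗[k] F₂) (K : F₂ →ₗ[k] F₁)
    (hK : K = (TensorProduct.rid k F₁).toLinearMap ∘ₗ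
        TensorProduct.map LinearMap.id ν ∘ₗ LinearMap.mulLeft k 𝒦 ∘ₗ
        TensorProduct.mk k F₁ F₂ 1) :
    (∀ (a : A) (f : F₂), K (M₂.ρ a f) = M₁.ρ a (K f)) ↔
      (∀ a : A, tensorAct k A F₁ F₂ M₁ M₂ a 𝒦
          = Coalgebra.counit (R := k) a • 𝒦) := by
  have hK' : K = Stmt5Aux.OpL ν 𝒦 := by rw [hK]; rfl
  constructor
  · intro hint a
    have hint' : ∀ (b : A) (g : F₂), Stmt5Aux.OpL ν 𝒦 (M₂.ρ b g)
        = M₁.ρ b (Stmt5Aux.OpL ν 𝒦 g) := by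
      intro b g
      rw [← hK']
      exact hint b g
    have key : ∀ f, Stmt5Aux.OpL ν (tensorAct k A F₁ F₂ M₁ M₂ a 𝒦) f
        = Coalgebra.counit (R := k) a • Stmt5Aux.OpL ν 𝒦 f := by
      intro f
      rw [← Stmt5Aux.claimB M₁ M₂ ν 𝒦 hinv f a,
        Stmt5Aux.claimA M₁ M₂ ν 𝒦 hint' f a]
    have hzero := Stmt5Aux.OpL_eq_zero ν hnd
      (tensorAct k A F₁ F₂ M₁ M₂ a 𝒦 - Coalgebra.counit (R := k) a • 𝒦)
      (fun f => by
        rw [map_sub, LinearMap.sub_apply, map_smul, LinearMap.smul_apply, key f, sub_self])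
    exact sub_eq_zero.mp hzero
  · intro hKinv a f
    rw [hK']
    have h1 := Stmt5Aux.dagger M₁ M₂ ν hinv 𝒦 f a
    rw [Stmt5Aux.L5 M₁ M₂ ν 𝒦 hKinv f, Coalgebra.rTensor_counit_comul] at h1
    simpa [TensorProduct.lid_tmul] using h1.symm
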